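/- Under the setup, suppose D₁ ≥ D₀ almost surely, for all d, z ∈ {0,1} the pair (Z, W) is conditionally independent of Y_{d,z} given (D₁, D₀), Z is conditionally independent of (D₁, D₀) given W, P(Z = z, W = w) > 0 for z ∈ {0,1}, P(NT) > 0, P(CP) > 0, and the never-taker average direct effect satisfies E[Y_{0,1} − Y_{0,0} | NT] = ρ₀. Then r₀(w) := E[Y·(1−D) | Z = 1, W = w] − E[Y·(1−D) | Z = 0, W = w] = ρ₀·P(NT | W = w) − E[Y_{0,0} | CP]·P(CP | W = w). -/

import Mathlib

open MeasureTheory ProbabilityTheory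

/-- `pr μ A` is the probability of the event `A`, as a real number. -/
noncomputable def pr {Ω : Type*} [MeasurableSpace Ω] (μ : Measure Ω) (A : Set Ω) : ℝ :=
  (μ A).toReal

/-- `prCond μ A B` is the conditional probability `P(A | B) = P(A ∩ B) / P(B)`. -/
noncomputable def prCond {Ω : Type*} [MeasurableSpace Ω] (μ : Measure Ω) (A B : Set Ω) : ℝ :=
  pr μ (A ∩ B) / pr μ B

/-- `cexp μ A f` is the conditional expectation `E[f | A]` of `f` given the event `A`. -/
noncomputable def cexp {Ω : Type*} [MeasurableSpace Ω] (μ : Measure Ω) (A : Set Ω)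
    (f : Ω → ℝ) : ℝ :=
  ∫ ω, f ω ∂(μ[|A])

/-- The event `{ω | f ω = c}`. -/
def evEq {Ω : Type*} (f : Ω → ℝ) (c : ℝ) : Set Ω := {ω | f ω = c}

/-- Always takers: `D₁ = D₀ = 1`. -/
def ATset {Ω : Type*} (D1 D0 : Ω → ℝ) : Set Ω := {ω | D1 ω = 1 ∧ D0 ω = 1}

/-- Never takers: `D₁ = D₀ = 0`. -/
def NTset {Ω : Type*} (D1 D0 : Ω → ℝ) : Set Ω := {ω | D1 ω = 0 ∧ D0 ω = 0}

/-- Compliers: `D₁ = 1`, `D₀ = 0`. -/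
def CPset {Ω : Type*} (D1 D0 : Ω → ℝ) : Set Ω := {ω | D1 ω = 1 ∧ D0 ω = 0}

section Helpers
variable {Ω : Type*} [MeasurableSpace Ω]

lemma pr_ne_zero {μ : Measure Ω} {A : Set Ω} (h : 0 < pr μ A) : μ A ≠ 0 := by
  intro h0; simp [pr, h0] at h

lemma integrable_cond {μ : Measure Ω} [IsFiniteMeasure μ] {A : Set Ω} {f : Ω → ℝ}
    (hA : μ A ≠ 0) (hf : Integrable f μ) : Integrable f (μ[|A]) := by
  rw [ProbabilityTheory.cond]
  exact (hf.restrict).smul_measure (ENNReal.inv_ne_top.2 hA)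

lemma cexp_eq (μ : Measure Ω) (A : Set Ω) (f : Ω → ℝ) :
    cexp μ A f = (pr μ A)⁻¹ * ∫ ω in A, f ω ∂μ := by
  rw [cexp, ProbabilityTheory.cond, integral_smul_measure, ENNReal.toReal_inv]
  simp [pr, smul_eq_mul]

lemma cexp_congr_on {μ : Measure Ω} {A : Set Ω} (hAm : MeasurableSet A) {f g : Ω → ℝ}
    (h : ∀ᵐ ω ∂μ, ω ∈ A → f ω = g ω) : cexp μ A f = cexp μ A g := by
  rw [cexp, cexp, ProbabilityTheory.cond]
  exact integral_congr_ae (Measure.ae_smul_measure ((ae_restrict_iff' hAm).2 h) _)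

lemma key_factor (μ : Measure Ω) [IsProbabilityMeasure μ]
    {f Z W : Ω → ℝ} (hf : Integrable f μ)
    {G : Set Ω} (hGm : MeasurableSet G) (hZm : Measurable Z) (hWm : Measurable W)
    (z w : ℝ)
    (hG : 0 < pr μ G) (hA : 0 < pr μ (evEq Z z ∩ evEq W w))
    (hCI1 : IndepFun (fun ω => (Z ω, W ω)) f (μ[|G]))
    (hc2 : μ[|evEq W w] (evEq Z z ∩ G)
      = μ[|evEq W w] (evEq Z z) * μ[|evEq W w] G) :
    cexp μ (evEq Z z ∩ evEq W w) (G.indicator f)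
      = cexp μ G f * prCond μ G (evEq W w) := by
  set Ez : Set Ω := evEq Z z with hEzdef
  set Ww : Set Ω := evEq W w with hWwdef
  have hEzm : MeasurableSet Ez := hZm (measurableSet_singleton z)
  have hWwm : MeasurableSet Ww := hWm (measurableSet_singleton w)
  have hAm : MeasurableSet (Ez ∩ Ww) := hEzm.inter hWwm
  have hGne : μ G ≠ 0 := pr_ne_zero hG
  have hAne : μ (Ez ∩ Ww) ≠ 0 := pr_ne_zero hA
  have hWne : μ Ww ≠ 0 := fun h0 => hAne (measure_mono_null Set.inter_subset_right h0)
  -- Step 1: independence factorization under μ[|G]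
  have hpre : Ez ∩ Ww = (fun ω => (Z ω, W ω)) ⁻¹' {(z, w)} := by
    ext ω; simp [hEzdef, hWwdef, evEq, Prod.ext_iff]
  have hφm : Measurable (({(z,w)} : Set (ℝ×ℝ)).indicator (fun _ => (1:ℝ))) :=
    measurable_const.indicator (measurableSet_singleton _)
  have hcomp := hCI1.comp hφm (measurable_id : Measurable (id : ℝ → ℝ))
  have hfun : ((({(z,w)} : Set (ℝ×ℝ)).indicator (fun _ => (1:ℝ))) ∘ (fun ω => (Z ω, W ω)))
      = (Ez ∩ Ww).indicator (fun _ => (1:ℝ)) := by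
    funext ω
    by_cases h : ω ∈ Ez ∩ Ww
    · have h' : (Z ω, W ω) ∈ ({(z,w)} : Set (ℝ×ℝ)) := by rw [hpre] at h; exact h
      simp [Function.comp, Set.indicator_of_mem h', Set.indicator_of_mem h]
    · have h' : (Z ω, W ω) ∉ ({(z,w)} : Set (ℝ×ℝ)) := by rw [hpre] at h; exact h
      simp [Function.comp, Set.indicator_of_notMem h', Set.indicator_of_notMem h]
  rw [hfun] at hcomp
  have hint1 : Integrable ((Ez ∩ Ww).indicator (fun _ => (1:ℝ))) (μ[|G]) :=
    integrable_cond hGne ((integrable_const (1:ℝ)).indicator hAm)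
  have hfG : Integrable f (μ[|G]) := integrable_cond hGne hf
  have hmul := hcomp.integral_mul_eq_mul_integral hint1.aestronglyMeasurable hfG.aestronglyMeasurable
  rw [Function.id_comp] at hmul
  have hif : ((Ez ∩ Ww).indicator (fun _ => (1:ℝ)) * f) = (Ez ∩ Ww).indicator f := by
    funext ω; by_cases h : ω ∈ Ez ∩ Ww <;> simp [Set.indicator, h]
  rw [hif] at hmul
  have hind1 : ∫ ω, (Ez ∩ Ww).indicator (fun _ => (1:ℝ)) ω ∂(μ[|G])
      = ((μ[|G]) (Ez ∩ Ww)).toReal := by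
    have := integral_indicator_one (μ := μ[|G]) hAm
    simpa [Set.indicator, measureReal_def] using this
  -- turn the lhs of hmul into a set integral over μ
  have hcondint : ∀ (B : Set Ω), MeasurableSet B → ∫ ω, B.indicator f ω ∂(μ[|G])
      = (pr μ G)⁻¹ * ∫ ω in G ∩ B, f ω ∂μ := by
    intro B hBm
    rw [ProbabilityTheory.cond, integral_smul_measure, ENNReal.toReal_inv,
      setIntegral_indicator hBm]
    simp [pr, smul_eq_mul]
  have hcondmeas : ((μ[|G]) (Ez ∩ Ww)).toReal = (pr μ G)⁻¹ * (μ (G ∩ (Ez ∩ Ww))).toReal := by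
    rw [cond_apply hGm]
    rw [ENNReal.toReal_mul, ENNReal.toReal_inv]; rfl
  have hcexpG : ∫ ω, f ω ∂(μ[|G]) = cexp μ G f := rfl
  rw [hcondint _ hAm, hind1, hcondmeas, hcexpG] at hmul
  have hGpos : (0:ℝ) < pr μ G := hG
  have hkey : ∫ ω in G ∩ (Ez ∩ Ww), f ω ∂μ = (μ (G ∩ (Ez ∩ Ww))).toReal * cexp μ G f := by
    have h2 : (pr μ G)⁻¹ * ∫ ω in G ∩ (Ez ∩ Ww), f ω ∂μ
        = (pr μ G)⁻¹ * ((μ (G ∩ (Ez ∩ Ww))).toReal * cexp μ G f) := by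
      rw [hmul]; ring
    exact mul_left_cancel₀ (inv_ne_zero (ne_of_gt hGpos)) h2
  -- Step 2: conditional independence of Z and group given W
  have hWfin : μ Ww ≠ ⊤ := measure_ne_top μ _
  have hc2' : (μ (Ww ∩ (Ez ∩ G))).toReal * (μ Ww).toReal
      = (μ (Ww ∩ Ez)).toReal * (μ (Ww ∩ G)).toReal := by
    have e1 := cond_apply (μ := μ) hWwm (Ez ∩ G)
    have e2 := cond_apply (μ := μ) hWwm Ez
    have e3 := cond_apply (μ := μ) hWwm G
    rw [e1, e2, e3] at hc2
    have := congrArg ENNReal.toReal hc2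
    simp only [ENNReal.toReal_mul, ENNReal.toReal_inv] at this
    have htne : (μ Ww).toReal ≠ 0 := by
      simp [ENNReal.toReal_ne_zero, hWne, hWfin]
    field_simp at this
    apply mul_right_cancel₀ htne
    linear_combination (μ Ww).toReal * this
  -- finish
  rw [cexp_eq, setIntegral_indicator hGm, show (Ez ∩ Ww) ∩ G = G ∩ (Ez ∩ Ww) by
    rw [Set.inter_comm], hkey, prCond, pr, pr, pr]
  have hWpos : (0:ℝ) < (μ Ww).toReal := by
    refine lt_of_le_of_ne ENNReal.toReal_nonneg ?_
    symm; simp [ENNReal.toReal_ne_zero, hWne, hWfin]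
  have hApos : (0:ℝ) < (μ (Ez ∩ Ww)).toReal := hA
  have hs1 : G ∩ (Ez ∩ Ww) = Ww ∩ (Ez ∩ G) := by
    ext ω; constructor
    · rintro ⟨h1, h2, h3⟩; exact ⟨h3, h2, h1⟩
    · rintro ⟨h1, h2, h3⟩; exact ⟨h3, h2, h1⟩
  have hs2 : Ez ∩ Ww = Ww ∩ Ez := Set.inter_comm _ _
  have hs3 : G ∩ Ww = Ww ∩ G := Set.inter_comm _ _
  rw [hs1, hs2, hs3]
  have hbpos : 0 < (μ (Ww ∩ Ez)).toReal := by rw [← hs2]; exact hApos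
  field_simp
  linear_combination (cexp μ G f) * hc2'

end Helpers

/-- the contrast `r₀(w)` decomposes into direct and complier terms. -/
theorem r0_decomposition
    {Ω : Type*} [MeasurableSpace Ω] (μ : Measure Ω) [IsProbabilityMeasure μ]
    (Y : Fin 2 → Fin 2 → Ω → ℝ) (D1 D0 Z W : Ω → ℝ)
    (hYint : ∀ d z, Integrable (Y d z) μ) (hYmeas : ∀ d z, Measurable (Y d z))
    (hD1v : ∀ ω, D1 ω = 0 ∨ D1 ω = 1) (hD0v : ∀ ω, D0 ω = 0 ∨ D0 ω = 1)
    (hZv : ∀ ω, Z ω = 0 ∨ Z ω = 1) (hWv : ∀ ω, W ω = 0 ∨ W ω = 1)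
    (hD1m : Measurable D1) (hD0m : Measurable D0) (hZm : Measurable Z) (hWm : Measurable W)
    (D : Ω → ℝ) (hD : ∀ ω, D ω = D1 ω * Z ω + D0 ω * (1 - Z ω))
    (Yo : Ω → ℝ)
    (hYo : ∀ ω, Yo ω = (Y 1 1 ω * Z ω + Y 1 0 ω * (1 - Z ω)) * D ω
      + (Y 0 1 ω * Z ω + Y 0 0 ω * (1 - Z ω)) * (1 - D ω))
    (hmono : ∀ᵐ ω ∂μ, D0 ω ≤ D1 ω)
    (hCI1 : ∀ (d z : Fin 2) (i j : ℝ),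
      IndepFun (fun ω => (Z ω, W ω)) (Y d z) (μ[|{ω | D1 ω = i ∧ D0 ω = j}]))
    (hCI2 : ∀ w' : ℝ, IndepFun Z (fun ω => (D1 ω, D0 ω)) (μ[|evEq W w']))
    (w : ℝ) (hw : w = 0 ∨ w = 1)
    (hpos : ∀ z : ℝ, z = 0 ∨ z = 1 → 0 < pr μ (evEq Z z ∩ evEq W w))
    (hNT : 0 < pr μ (NTset D1 D0)) (hCP : 0 < pr μ (CPset D1 D0))
    (ρ0 : ℝ) (hρ0 : cexp μ (NTset D1 D0) (fun ω => Y 0 1 ω - Y 0 0 ω) = ρ0) :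
    cexp μ (evEq Z 1 ∩ evEq W w) (fun ω => Yo ω * (1 - D ω))
      - cexp μ (evEq Z 0 ∩ evEq W w) (fun ω => Yo ω * (1 - D ω))
      = ρ0 * prCond μ (NTset D1 D0) (evEq W w)
        - cexp μ (CPset D1 D0) (fun ω => Y 0 0 ω) * prCond μ (CPset D1 D0) (evEq W w) := by
  set NT := NTset D1 D0 with hNTdef
  set CP := CPset D1 D0 with hCPdef
  have hNTm : MeasurableSet NT :=
    (hD1m (measurableSet_singleton 0)).inter (hD0m (measurableSet_singleton 0))
  have hCPm : MeasurableSet CP :=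
    (hD1m (measurableSet_singleton 1)).inter (hD0m (measurableSet_singleton 0))
  have hA1 := hpos 1 (Or.inr rfl)
  have hA0 := hpos 0 (Or.inl rfl)
  have hA1m : MeasurableSet (evEq Z 1 ∩ evEq W w) :=
    (hZm (measurableSet_singleton 1)).inter (hWm (measurableSet_singleton w))
  have hA0m : MeasurableSet (evEq Z 0 ∩ evEq W w) :=
    (hZm (measurableSet_singleton 0)).inter (hWm (measurableSet_singleton w))
  have hA1ne : μ (evEq Z 1 ∩ evEq W w) ≠ 0 := pr_ne_zero hA1
  have hA0ne : μ (evEq Z 0 ∩ evEq W w) ≠ 0 := pr_ne_zero hA0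
  have hNTne : μ NT ≠ 0 := pr_ne_zero hNT
  have hCPne : μ CP ≠ 0 := pr_ne_zero hCP
  -- pointwise reduction on Z = 1
  have e1 : cexp μ (evEq Z 1 ∩ evEq W w) (fun ω => Yo ω * (1 - D ω))
      = cexp μ (evEq Z 1 ∩ evEq W w) (NT.indicator (Y 0 1)) := by
    apply cexp_congr_on hA1m
    filter_upwards [hmono] with ω hm hω
    obtain ⟨hz, -⟩ := hω
    have hz' : Z ω = 1 := hz
    rcases hD1v ω with h1 | h1
    · have hd0 : D0 ω = 0 := by
        rcases hD0v ω with h | h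
        · exact h
        · exfalso; rw [h, h1] at hm; linarith
      have hmem : ω ∈ NT := ⟨h1, hd0⟩
      have hDω : D ω = 0 := by rw [hD ω, hz', h1]; ring
      rw [Set.indicator_of_mem hmem, hYo ω, hDω, hz']; ring
    · have hmem : ω ∉ NT := by intro hc; rw [hc.1] at h1; norm_num at h1
      have hDω : D ω = 1 := by rw [hD ω, hz', h1]; ring
      rw [Set.indicator_of_notMem hmem, hDω]; ring
  -- pointwise reduction on Z = 0
  have e0 : cexp μ (evEq Z 0 ∩ evEq W w) (fun ω => Yo ω * (1 - D ω))
      = cexp μ (evEq Z 0 ∩ evEq W w)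
          (fun ω => NT.indicator (Y 0 0) ω + CP.indicator (Y 0 0) ω) := by
    apply cexp_congr_on hA0m
    filter_upwards with ω hω
    obtain ⟨hz, -⟩ := hω
    have hz' : Z ω = 0 := hz
    rcases hD0v ω with h0 | h0
    · have hDω : D ω = 0 := by rw [hD ω, hz', h0]; ring
      rcases hD1v ω with h1 | h1
      · have hmem : ω ∈ NT := ⟨h1, h0⟩
        have hnm : ω ∉ CP := by intro hc; rw [hc.1] at h1; norm_num at h1
        rw [Set.indicator_of_mem hmem, Set.indicator_of_notMem hnm, hYo ω, hDω, hz']; ring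
      · have hmem : ω ∈ CP := ⟨h1, h0⟩
        have hnm : ω ∉ NT := by intro hc; rw [hc.1] at h1; norm_num at h1
        rw [Set.indicator_of_notMem hnm, Set.indicator_of_mem hmem, hYo ω, hDω, hz']; ring
    · have hDω : D ω = 1 := by rw [hD ω, hz', h0]; ring
      have hn1 : ω ∉ NT := by intro hc; rw [hc.2] at h0; norm_num at h0
      have hn2 : ω ∉ CP := by intro hc; rw [hc.2] at h0; norm_num at h0
      rw [Set.indicator_of_notMem hn1, Set.indicator_of_notMem hn2, hDω]; ring
  have esplit : cexp μ (evEq Z 0 ∩ evEq W w)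
        (fun ω => NT.indicator (Y 0 0) ω + CP.indicator (Y 0 0) ω)
      = cexp μ (evEq Z 0 ∩ evEq W w) (NT.indicator (Y 0 0))
        + cexp μ (evEq Z 0 ∩ evEq W w) (CP.indicator (Y 0 0)) :=
    integral_add (integrable_cond hA0ne ((hYint 0 0).indicator hNTm))
      (integrable_cond hA0ne ((hYint 0 0).indicator hCPm))
  -- conditional independence of Z and the groups given W
  have hc2gen : ∀ (z i j : ℝ),
      μ[|evEq W w] (evEq Z z ∩ {ω | D1 ω = i ∧ D0 ω = j})
        = μ[|evEq W w] (evEq Z z) * μ[|evEq W w] {ω | D1 ω = i ∧ D0 ω = j} := by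
    intro z i j
    have h := (indepFun_iff_measure_inter_preimage_eq_mul.mp (hCI2 w)) {z} {(i, j)}
      (measurableSet_singleton _) (measurableSet_singleton _)
    have hs1 : Z ⁻¹' {z} = evEq Z z := rfl
    have hs2 : (fun ω => (D1 ω, D0 ω)) ⁻¹' {(i, j)} = {ω | D1 ω = i ∧ D0 ω = j} := by
      ext ω; simp [Prod.ext_iff]
    rw [hs1, hs2] at h
    exact h
  have k1 : cexp μ (evEq Z 1 ∩ evEq W w) (NT.indicator (Y 0 1))
      = cexp μ NT (Y 0 1) * prCond μ NT (evEq W w) :=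
    key_factor μ (hYint 0 1) hNTm hZm hWm 1 w hNT hA1 (hCI1 0 1 0 0) (hc2gen 1 0 0)
  have k2 : cexp μ (evEq Z 0 ∩ evEq W w) (NT.indicator (Y 0 0))
      = cexp μ NT (Y 0 0) * prCond μ NT (evEq W w) :=
    key_factor μ (hYint 0 0) hNTm hZm hWm 0 w hNT hA0 (hCI1 0 0 0 0) (hc2gen 0 0 0)
  have k3 : cexp μ (evEq Z 0 ∩ evEq W w) (CP.indicator (Y 0 0))
      = cexp μ CP (Y 0 0) * prCond μ CP (evEq W w) :=
    key_factor μ (hYint 0 0) hCPm hZm hWm 0 w hCP hA0 (hCI1 0 0 1 0) (hc2gen 0 1 0)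
  have hsub : cexp μ NT (Y 0 1) - cexp μ NT (Y 0 0) = ρ0 := by
    rw [← hρ0]
    exact (integral_sub (integrable_cond hNTne (hYint 0 1))
      (integrable_cond hNTne (hYint 0 0))).symm
  rw [e1, e0, esplit, k1, k2, k3, ← hsub]
  ring
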